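/- Let Σ be a symmetric positive semidefinite d×d matrix partitioned into L×L blocks Σ_{ℓk} with each diagonal block Σ_{ℓℓ} ≻ 0 of size d_ℓ. Let σ_ℓ = tr(Σ_ℓℓ)/d_ℓ, and let P_ℓ be the orthogonal projection onto the eigenvectors of Σ_ℓℓ with eigenvalue ≤ 2σ_ℓ. Then the whitened coupling M = D^{-1/2}(Σ - D)D^{-1/2} (D the block-diagonal of Σ) satisfies ‖M‖₂ ≥ ( (1/(4d)) Σ_{ℓ≠k} ‖P_ℓ Σ_{ℓk} P_k‖_F² / (σ_ℓ σ_k) )^{1/2}. -/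

import Mathlib

open Matrix MeasureTheory BigOperators
noncomputable section

/-- Euclidean (spectral / operator) norm of a real square matrix. -/
def opN {n : Type*} [Fintype n] [DecidableEq n] (A : Matrix n n ℝ) : ℝ :=
  ‖Matrix.toEuclideanCLM (𝕜 := ℝ) A‖

/-- Euclidean norm of a vector. -/
def vN {n : Type*} [Fintype n] (v : n → ℝ) : ℝ := Real.sqrt (∑ i, v i ^ 2)

/-- Frobenius norm of a rectangular real matrix. -/
def frobN {m k : Type*} [Fintype m] [Fintype k] (A : Matrix m k ℝ) : ℝ :=
  Real.sqrt (∑ i, ∑ j, A i j ^ 2)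

/-- The positive semidefinite square root of a positive semidefinite matrix
(the definition `Matrix.PosSemidef.sqrt` of the older Mathlib, removed since). -/
def Matrix.PosSemidef.sqrt {n : Type*} [Fintype n] [DecidableEq n]
    {A : Matrix n n ℝ} (hA : A.PosSemidef) : Matrix n n ℝ :=
  hA.1.eigenvectorUnitary.1 * diagonal ((↑) ∘ (Real.sqrt ·) ∘ hA.1.eigenvalues) *
    (star hA.1.eigenvectorUnitary : Matrix n n ℝ)

set_option linter.unusedSectionVars false

namespace WCLB

def frobSq {m k : Type*} [Fintype m] [Fintype k] (A : Matrix m k ℝ) : ℝ :=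
  ∑ i, ∑ j, A i j ^ 2

lemma frobSq_nonneg {m k : Type*} [Fintype m] [Fintype k] (A : Matrix m k ℝ) :
    0 ≤ frobSq A :=
  Finset.sum_nonneg fun _ _ => Finset.sum_nonneg fun _ _ => sq_nonneg _

lemma frobN_sq {m k : Type*} [Fintype m] [Fintype k] (A : Matrix m k ℝ) :
    frobN A ^ 2 = frobSq A := Real.sq_sqrt (frobSq_nonneg A)

lemma frobSq_transpose {m k : Type*} [Fintype m] [Fintype k] (A : Matrix m k ℝ) :
    frobSq Aᵀ = frobSq A := Finset.sum_comm

lemma frobSq_mul_left_le {m k : Type*} [Fintype m] [Fintype k]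
    (R : Matrix m m ℝ) (X : Matrix m k ℝ) (c : ℝ)
    (h : ∀ x : m → ℝ, (R *ᵥ x) ⬝ᵥ (R *ᵥ x) ≤ c * (x ⬝ᵥ x)) :
    frobSq (R * X) ≤ c * frobSq X := by
  have key : ∀ j, ∑ i, ((R * X) i j) ^ 2 ≤ c * ∑ i, X i j ^ 2 := by
    intro j
    have h1 := h (fun t => X t j)
    simp only [dotProduct, mulVec, dotProduct] at h1
    calc ∑ i, ((R * X) i j) ^ 2 = ∑ i, (∑ t, R i t * X t j) * (∑ t, R i t * X t j) := by
          simp [Matrix.mul_apply, sq]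
      _ ≤ c * ∑ t, X t j * X t j := h1
      _ = c * ∑ i, X i j ^ 2 := by simp [sq]
  calc frobSq (R * X) = ∑ j, ∑ i, ((R * X) i j) ^ 2 := Finset.sum_comm
    _ ≤ ∑ j, c * ∑ i, X i j ^ 2 := Finset.sum_le_sum fun j _ => key j
    _ = c * frobSq X := by rw [← Finset.mul_sum]; rw [frobSq]; rw [Finset.sum_comm]

lemma frobSq_mul_right_le {m k : Type*} [Fintype m] [Fintype k]
    (R : Matrix k k ℝ) (X : Matrix m k ℝ) (c : ℝ) (hR : Rᵀ = R)
    (h : ∀ x : k → ℝ, (R *ᵥ x) ⬝ᵥ (R *ᵥ x) ≤ c * (x ⬝ᵥ x)) :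
    frobSq (X * R) ≤ c * frobSq X := by
  have := frobSq_mul_left_le R Xᵀ c h
  rw [frobSq_transpose] at this
  calc frobSq (X * R) = frobSq ((X * R)ᵀ) := (frobSq_transpose _).symm
    _ = frobSq (R * Xᵀ) := by rw [Matrix.transpose_mul, hR]
    _ ≤ c * frobSq X := this

lemma orth_dot {m : Type*} [Fintype m] [DecidableEq m]
    (U : Matrix m m ℝ) (hU' : Uᵀ * U = 1) (a b : m → ℝ) :
    (U *ᵥ a) ⬝ᵥ (U *ᵥ b) = a ⬝ᵥ b := by
  rw [Matrix.dotProduct_mulVec, Matrix.vecMul_mulVec, hU', Matrix.vecMul_one]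

lemma qform_bound {m : Type*} [Fintype m] [DecidableEq m]
    (U : Matrix m m ℝ) (hU : U * Uᵀ = 1) (hU' : Uᵀ * U = 1)
    (μ : m → ℝ) (c : ℝ) (hμ : ∀ i, μ i ^ 2 ≤ c) (x : m → ℝ) :
    ((U * Matrix.diagonal μ * Uᵀ) *ᵥ x) ⬝ᵥ ((U * Matrix.diagonal μ * Uᵀ) *ᵥ x)
      ≤ c * (x ⬝ᵥ x) := by
  have hT : Uᵀᵀ * Uᵀ = 1 := by rw [Matrix.transpose_transpose, hU]
  set y := Uᵀ *ᵥ x with hy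
  have h1 : (U * Matrix.diagonal μ * Uᵀ) *ᵥ x = U *ᵥ (Matrix.diagonal μ *ᵥ y) := by
    rw [hy, Matrix.mulVec_mulVec, Matrix.mulVec_mulVec]
  have h2 : x ⬝ᵥ x = y ⬝ᵥ y := (orth_dot Uᵀ hT x x).symm
  rw [h1, orth_dot U hU', h2]
  have hd : ∀ i, (Matrix.diagonal μ *ᵥ y) i = μ i * y i := fun i => Matrix.mulVec_diagonal μ y i
  simp only [dotProduct, hd]
  calc ∑ i, (μ i * y i) * (μ i * y i) = ∑ i, μ i ^ 2 * (y i * y i) := by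
        congr 1; funext i; ring
    _ ≤ ∑ i, c * (y i * y i) :=
        Finset.sum_le_sum fun i _ => mul_le_mul_of_nonneg_right (hμ i) (mul_self_nonneg _)
    _ = c * ∑ i, y i * y i := (Finset.mul_sum _ _ _).symm

lemma sandwich_mul {m : Type*} [Fintype m] [DecidableEq m]
    (U : Matrix m m ℝ) (hU' : Uᵀ * U = 1) (a b : m → ℝ) :
    (U * Matrix.diagonal a * Uᵀ) * (U * Matrix.diagonal b * Uᵀ)
      = U * Matrix.diagonal (fun i => a i * b i) * Uᵀ := by
  have hdd : Matrix.diagonal a * Matrix.diagonal b = Matrix.diagonal (fun i => a i * b i) :=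
    Matrix.diagonal_mul_diagonal a b
  calc (U * Matrix.diagonal a * Uᵀ) * (U * Matrix.diagonal b * Uᵀ)
      = U * Matrix.diagonal a * (Uᵀ * U) * Matrix.diagonal b * Uᵀ := by
        simp only [Matrix.mul_assoc]
    _ = U * Matrix.diagonal (fun i => a i * b i) * Uᵀ := by
        rw [hU', Matrix.mul_one, Matrix.mul_assoc, Matrix.mul_assoc,
          ← Matrix.mul_assoc (Matrix.diagonal a), hdd, ← Matrix.mul_assoc]

lemma sandwich_transpose {m : Type*} [Fintype m] [DecidableEq m]
    (U : Matrix m m ℝ) (a : m → ℝ) :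
    (U * Matrix.diagonal a * Uᵀ)ᵀ = U * Matrix.diagonal a * Uᵀ := by
  rw [Matrix.transpose_mul, Matrix.transpose_mul, Matrix.transpose_transpose,
    Matrix.diagonal_transpose, Matrix.mul_assoc]

lemma frobSq_le_card_mul_opN_sq {n : Type*} [Fintype n] [DecidableEq n] (A : Matrix n n ℝ) :
    frobSq A ≤ (Fintype.card n : ℝ) * opN A ^ 2 := by
  have key : ∀ j, ∑ i, A i j ^ 2 ≤ opN A ^ 2 := by
    intro j
    set v : EuclideanSpace ℝ n := (WithLp.equiv 2 (n → ℝ)).symm (Pi.single j 1) with hv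
    have hnv : ‖v‖ = 1 := by
      rw [hv, EuclideanSpace.norm_eq]
      simp [Pi.single_apply, apply_ite]
    have happ : Matrix.toEuclideanCLM (𝕜 := ℝ) A v
        = (WithLp.equiv 2 (n → ℝ)).symm (A *ᵥ Pi.single j 1) :=
      Matrix.toEuclideanCLM_toLp A _
    have hle := (Matrix.toEuclideanCLM (𝕜 := ℝ) A).le_opNorm v
    rw [hnv, mul_one, happ] at hle
    have hnorm : ‖(WithLp.equiv 2 (n → ℝ)).symm (A *ᵥ Pi.single j 1)‖
        = Real.sqrt (∑ i, A i j ^ 2) := by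
      rw [EuclideanSpace.norm_eq]
      congr 1
      refine Finset.sum_congr rfl fun i _ => ?_
      have hAv : (A *ᵥ Pi.single j 1) i = A i j := by
        simp [Matrix.mulVec, dotProduct, Pi.single_apply]
      simp [hAv, sq_abs]
    rw [hnorm] at hle
    have h0 : (0:ℝ) ≤ ∑ i, A i j ^ 2 := Finset.sum_nonneg fun _ _ => sq_nonneg _
    calc ∑ i, A i j ^ 2 = Real.sqrt (∑ i, A i j ^ 2) ^ 2 := (Real.sq_sqrt h0).symm
      _ ≤ opN A ^ 2 := pow_le_pow_left₀ (Real.sqrt_nonneg _) hle 2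
  calc frobSq A = ∑ j, ∑ i, A i j ^ 2 := Finset.sum_comm
    _ ≤ ∑ _j : n, opN A ^ 2 := Finset.sum_le_sum fun j _ => key j
    _ = (Fintype.card n : ℝ) * opN A ^ 2 := by
        rw [Finset.sum_const, nsmul_eq_mul, Finset.card_univ]

section Sigma
variable {L : Type*} [Fintype L] [DecidableEq L] {p : L → Type*}
  [∀ ℓ, Fintype (p ℓ)] [∀ ℓ, DecidableEq (p ℓ)]

def blkOf (X : Matrix (Σ ℓ, p ℓ) (Σ ℓ, p ℓ) ℝ) (ℓ k : L) : Matrix (p ℓ) (p k) ℝ :=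
  Matrix.of fun i j => X ⟨ℓ, i⟩ ⟨k, j⟩

omit [DecidableEq L] [∀ ℓ, DecidableEq (p ℓ)] in
lemma sum_sigma_univ (f : (Σ ℓ, p ℓ) → ℝ) : ∑ x : Σ ℓ, p ℓ, f x = ∑ ℓ, ∑ i, f ⟨ℓ, i⟩ := by
  rw [← Finset.univ_sigma_univ, Finset.sum_sigma]

omit [DecidableEq L] [∀ ℓ, DecidableEq (p ℓ)] in
lemma frobSq_sigma (X : Matrix (Σ ℓ, p ℓ) (Σ ℓ, p ℓ) ℝ) :
    frobSq X = ∑ ℓ, ∑ k, frobSq (blkOf X ℓ k) := by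
  rw [frobSq, sum_sigma_univ (f := fun a => ∑ b, X a b ^ 2)]
  refine Finset.sum_congr rfl fun ℓ _ => ?_
  have h : ∀ i : p ℓ, ∑ b, X ⟨ℓ, i⟩ b ^ 2 = ∑ k, ∑ j, X ⟨ℓ, i⟩ ⟨k, j⟩ ^ 2 :=
    fun i => sum_sigma_univ _
  simp_rw [h]
  rw [Finset.sum_comm]
  rfl

lemma blockDiagonal'_mul_apply (W : ∀ ℓ, Matrix (p ℓ) (p ℓ) ℝ)
    (X : Matrix (Σ ℓ, p ℓ) (Σ ℓ, p ℓ) ℝ) (ℓ : L) (i : p ℓ) (b : Σ ℓ, p ℓ) :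
    (blockDiagonal' W * X) ⟨ℓ, i⟩ b = ∑ t, W ℓ i t * X ⟨ℓ, t⟩ b := by
  rw [Matrix.mul_apply, sum_sigma_univ (f := fun a => blockDiagonal' W ⟨ℓ, i⟩ a * X a b)]
  rw [Finset.sum_eq_single ℓ]
  · refine Finset.sum_congr rfl fun t _ => ?_
    rw [blockDiagonal'_apply_eq]
  · intro m _ hm
    apply Finset.sum_eq_zero; intro t _
    rw [blockDiagonal'_apply_ne _ _ _ (Ne.symm hm), zero_mul]
  · intro h; exact absurd (Finset.mem_univ ℓ) h

lemma mul_blockDiagonal'_apply (W : ∀ ℓ, Matrix (p ℓ) (p ℓ) ℝ)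
    (X : Matrix (Σ ℓ, p ℓ) (Σ ℓ, p ℓ) ℝ) (a : Σ ℓ, p ℓ) (k : L) (j : p k) :
    (X * blockDiagonal' W) a ⟨k, j⟩ = ∑ t, X a ⟨k, t⟩ * W k t j := by
  rw [Matrix.mul_apply, sum_sigma_univ (f := fun b => X a b * blockDiagonal' W b ⟨k, j⟩)]
  rw [Finset.sum_eq_single k]
  · refine Finset.sum_congr rfl fun t _ => ?_
    rw [blockDiagonal'_apply_eq]
  · intro m _ hm
    apply Finset.sum_eq_zero; intro t _
    rw [blockDiagonal'_apply_ne _ _ _ hm, mul_zero]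
  · intro h; exact absurd (Finset.mem_univ k) h

lemma blkOf_sandwich (W : ∀ ℓ, Matrix (p ℓ) (p ℓ) ℝ)
    (X : Matrix (Σ ℓ, p ℓ) (Σ ℓ, p ℓ) ℝ) (ℓ k : L) :
    blkOf (blockDiagonal' W * X * blockDiagonal' W) ℓ k
      = W ℓ * blkOf X ℓ k * W k := by
  ext i j
  have h1 : ∀ t, (blockDiagonal' W * X) ⟨ℓ, i⟩ ⟨k, t⟩ = (W ℓ * blkOf X ℓ k) i t := by
    intro t; rw [blockDiagonal'_mul_apply, Matrix.mul_apply]; rfl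
  show ((blockDiagonal' W * X) * blockDiagonal' W) ⟨ℓ, i⟩ ⟨k, j⟩ = _
  rw [mul_blockDiagonal'_apply]
  simp_rw [h1]
  rw [Matrix.mul_apply]

lemma blockDiagonal'_mulVec (W : ∀ ℓ, Matrix (p ℓ) (p ℓ) ℝ)
    (x : (Σ ℓ, p ℓ) → ℝ) (ℓ : L) (i : p ℓ) :
    (blockDiagonal' W *ᵥ x) ⟨ℓ, i⟩ = (W ℓ *ᵥ fun t => x ⟨ℓ, t⟩) i := by
  rw [Matrix.mulVec, dotProduct,
    sum_sigma_univ (f := fun a => blockDiagonal' W ⟨ℓ, i⟩ a * x a)]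
  rw [Finset.sum_eq_single ℓ]
  · refine Finset.sum_congr rfl fun t _ => ?_
    rw [blockDiagonal'_apply_eq]
  · intro m _ hm
    apply Finset.sum_eq_zero; intro t _
    rw [blockDiagonal'_apply_ne _ _ _ (Ne.symm hm), zero_mul]
  · intro h; exact absurd (Finset.mem_univ ℓ) h

lemma blockDiagonal'_posSemidef (W : ∀ ℓ, Matrix (p ℓ) (p ℓ) ℝ)
    (hW : ∀ ℓ, (W ℓ).PosSemidef) : (blockDiagonal' W).PosSemidef := by
  rw [Matrix.posSemidef_iff_dotProduct_mulVec]
  constructor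
  · have : ∀ ℓ, (W ℓ)ᴴ = W ℓ := fun ℓ => (hW ℓ).1
    rw [Matrix.IsHermitian, Matrix.blockDiagonal'_conjTranspose]
    simp_rw [this]
  · intro x
    have hx : star x ⬝ᵥ (blockDiagonal' W *ᵥ x)
        = ∑ ℓ, (star fun t => x ⟨ℓ, t⟩) ⬝ᵥ (W ℓ *ᵥ fun t => x ⟨ℓ, t⟩) := by
      rw [dotProduct, sum_sigma_univ (f := fun a => star x a * (blockDiagonal' W *ᵥ x) a)]
      refine Finset.sum_congr rfl fun ℓ _ => ?_
      refine Finset.sum_congr rfl fun i _ => ?_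
      rw [blockDiagonal'_mulVec]
      rfl
    rw [hx]
    exact Finset.sum_nonneg fun ℓ _ => (hW ℓ).dotProduct_mulVec_nonneg _

end Sigma


lemma frobSq_submatrix {m m' k k' : Type*} [Fintype m] [Fintype m'] [Fintype k] [Fintype k']
    (e1 : m ≃ m') (e2 : k ≃ k') (A : Matrix m' k' ℝ) :
    frobSq (A.submatrix e1 e2) = frobSq A := by
  rw [frobSq, frobSq, ← Equiv.sum_comp e1 (fun i => ∑ j, A i j ^ 2)]
  refine Finset.sum_congr rfl fun i _ => ?_
  rw [← Equiv.sum_comp e2 (fun j => A (e1 i) j ^ 2)]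
  rfl

lemma conj_diag_entry {m : Type*} [Fintype m] (A V : Matrix m m ℝ) (i : m) :
    (Vᵀ * A * V) i i = (fun t => V t i) ⬝ᵥ (A *ᵥ fun t => V t i) := by
  simp only [Matrix.mul_apply, Matrix.transpose_apply, dotProduct, Matrix.mulVec,
    Finset.sum_mul, Finset.mul_sum]
  rw [Finset.sum_comm]
  refine Finset.sum_congr rfl fun s _ => Finset.sum_congr rfl fun t _ => by ring

lemma posdef_diag_entry_pos {m : Type*} [Fintype m] [DecidableEq m]
    {A : Matrix m m ℝ} (hA : A.PosDef) (i : m) : 0 < A i i := by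
  have h := hA.dotProduct_mulVec_pos (x := Pi.single i 1) (by
    intro h0
    have := congrFun h0 i
    simp at this)
  have hdot : star (Pi.single i 1 : m → ℝ) ⬝ᵥ (A *ᵥ Pi.single i 1) = A i i := by
    simp [dotProduct, Matrix.mulVec, Pi.single_apply, Finset.mul_sum]
  rwa [hdot] at h


section
open scoped MatrixOrder
lemma psd_sqrt_eq {n : Type*} [Fintype n] [DecidableEq n] {A B : Matrix n n ℝ}
    (hB : B.PosSemidef) (hA : A.PosSemidef) (h : B ^ 2 = A) : hA.sqrt = B := by
  have h1 : hA.sqrt = cfc Real.sqrt A := by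
    rw [hA.1.cfc_eq, IsHermitian.cfc, Unitary.conjStarAlgAut_apply]
    rfl
  rw [h1, ← cfcₙ_eq_cfc, ← CFC.sqrt_eq_real_sqrt A hA.nonneg]
  exact CFC.sqrt_unique (by rw [← sq]; exact h) hB.nonneg
end

end WCLB

open WCLB

/-- lower bound on the whitened coupling norm in terms of
low-energy-projected off-diagonal blocks:
`‖M‖₂ ≥ ( (1/(4d)) ∑_{ℓ≠k} ‖P_ℓ Σ_{ℓk} P_k‖_F² / (σ_ℓ σ_k) )^{1/2}`. -/

theorem whitened_coupling_lower_bound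
    {n L : Type*} [Fintype n] [DecidableEq n] [Fintype L] [DecidableEq L]
    (blk : n → L)
    (Sig D M : Matrix n n ℝ)
    (hSig : Sig.PosSemidef)
    (hblocks : ∀ ℓ : L,
      (Matrix.of fun i j : {i : n // blk i = ℓ} => Sig i.1 j.1).PosDef)
    (hD : D.PosDef)
    (hDdef : ∀ i j, D i j = if blk i = blk j then Sig i j else 0)
    (hM : M = (hD.posSemidef.sqrt)⁻¹ * (Sig - D) * (hD.posSemidef.sqrt)⁻¹)
    (σ : L → ℝ)
    (hσ : ∀ ℓ, σ ℓ = (∑ i : {i : n // blk i = ℓ}, Sig i.1 i.1) /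
      (Fintype.card {i : n // blk i = ℓ}))
    (U : ∀ ℓ : L, Matrix {i : n // blk i = ℓ} {i : n // blk i = ℓ} ℝ)
    (lam : ∀ ℓ : L, {i : n // blk i = ℓ} → ℝ)
    (hU : ∀ ℓ, U ℓ * (U ℓ)ᵀ = 1)
    (hU' : ∀ ℓ, (U ℓ)ᵀ * U ℓ = 1)
    (hdecomp : ∀ ℓ, (Matrix.of fun i j : {i : n // blk i = ℓ} => Sig i.1 j.1) =
      U ℓ * Matrix.diagonal (lam ℓ) * (U ℓ)ᵀ)
    (P : ∀ ℓ : L, Matrix {i : n // blk i = ℓ} {i : n // blk i = ℓ} ℝ)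
    (hP : ∀ ℓ, P ℓ =
      U ℓ * Matrix.diagonal (fun i => if lam ℓ i ≤ 2 * σ ℓ then (1 : ℝ) else 0) * (U ℓ)ᵀ) :
    opN M ≥ Real.sqrt ((1 / (4 * (Fintype.card n : ℝ))) *
      ∑ ℓ : L, ∑ k : L, if ℓ = k then 0 else
        frobN (P ℓ * (Matrix.of fun (i : {i : n // blk i = ℓ}) (j : {i : n // blk i = k}) => Sig i.1 j.1) * P k) ^ 2 / (σ ℓ * σ k)) := by
  classical
  set e : (Σ ℓ : L, {i : n // blk i = ℓ}) ≃ n := Equiv.sigmaFiberEquiv blk with he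
  set SigB : ∀ ℓ : L, Matrix {i : n // blk i = ℓ} {i : n // blk i = ℓ} ℝ :=
    fun ℓ => Matrix.of fun i j => Sig i.1 j.1 with hSigB
  -- eigenvalues are positive
  have hconj : ∀ ℓ, (U ℓ)ᵀ * SigB ℓ * U ℓ = Matrix.diagonal (lam ℓ) := by
    intro ℓ
    rw [hSigB]
    show (U ℓ)ᵀ * (Matrix.of fun i j => Sig i.1 j.1) * U ℓ = _
    rw [hdecomp ℓ]
    calc (U ℓ)ᵀ * (U ℓ * Matrix.diagonal (lam ℓ) * (U ℓ)ᵀ) * U ℓ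
        = ((U ℓ)ᵀ * U ℓ) * Matrix.diagonal (lam ℓ) * ((U ℓ)ᵀ * U ℓ) := by
          simp only [Matrix.mul_assoc]
      _ = Matrix.diagonal (lam ℓ) := by rw [hU' ℓ, Matrix.one_mul, Matrix.mul_one]
  have lam_pos : ∀ ℓ i, 0 < lam ℓ i := by
    intro ℓ i
    have hdiag : Matrix.diagonal (lam ℓ) = (U ℓ)ᵀ * SigB ℓ * U ℓ := (hconj ℓ).symm
    have hcol : (fun t => U ℓ t i) ≠ 0 := by
      intro h0
      have h1 : ((U ℓ)ᵀ * U ℓ) i i = 0 := by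
        rw [Matrix.mul_apply]
        apply Finset.sum_eq_zero; intro t _
        have ht : U ℓ t i = 0 := congrFun h0 t
        simp [Matrix.transpose_apply, ht]
      rw [hU' ℓ] at h1
      simp at h1
    have hq := (hblocks ℓ).dotProduct_mulVec_pos hcol
    have hform : lam ℓ i = (fun t => U ℓ t i) ⬝ᵥ (SigB ℓ *ᵥ fun t => U ℓ t i) := by
      rw [← conj_diag_entry (SigB ℓ) (U ℓ) i, ← hdiag, Matrix.diagonal_apply_eq]
    rw [hform]
    exact hq
  -- block averages are positive on nonempty blocks
  have sig_pos : ∀ ℓ : L, Nonempty {i : n // blk i = ℓ} → 0 < σ ℓ := by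
    intro ℓ hne
    rw [hσ ℓ]
    have hcard : (0:ℝ) < (Fintype.card {i : n // blk i = ℓ} : ℝ) := by
      have := Fintype.card_pos_iff.mpr hne
      exact_mod_cast this
    apply div_pos _ hcard
    apply Finset.sum_pos _ Finset.univ_nonempty
    intro i _
    exact posdef_diag_entry_pos (hblocks ℓ) i
  -- square-root and inverse-square-root blocks
  set Sb : ∀ ℓ : L, Matrix {i : n // blk i = ℓ} {i : n // blk i = ℓ} ℝ :=
    fun ℓ => U ℓ * Matrix.diagonal (fun i => Real.sqrt (lam ℓ i)) * (U ℓ)ᵀ with hSb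
  set Wb : ∀ ℓ : L, Matrix {i : n // blk i = ℓ} {i : n // blk i = ℓ} ℝ :=
    fun ℓ => U ℓ * Matrix.diagonal (fun i => (Real.sqrt (lam ℓ i))⁻¹) * (U ℓ)ᵀ with hWb
  set Rb : ∀ ℓ : L, Matrix {i : n // blk i = ℓ} {i : n // blk i = ℓ} ℝ :=
    fun ℓ => U ℓ * Matrix.diagonal
      (fun i => if lam ℓ i ≤ 2 * σ ℓ then Real.sqrt (lam ℓ i) else 0) * (U ℓ)ᵀ with hRb
  have sqrt_ne : ∀ ℓ i, Real.sqrt (lam ℓ i) ≠ 0 :=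
    fun ℓ i => ne_of_gt (Real.sqrt_pos.mpr (lam_pos ℓ i))
  have hSbSb : ∀ ℓ, Sb ℓ * Sb ℓ = SigB ℓ := by
    intro ℓ
    rw [hSb, hSigB]
    show _ = Matrix.of fun (i j : {i : n // blk i = ℓ}) => Sig i.1 j.1
    rw [sandwich_mul (U ℓ) (hU' ℓ), hdecomp ℓ]
    have hf : (fun i => Real.sqrt (lam ℓ i) * Real.sqrt (lam ℓ i)) = lam ℓ :=
      funext fun i => Real.mul_self_sqrt (lam_pos ℓ i).le
    rw [hf]
  have hSbWb : ∀ ℓ, Sb ℓ * Wb ℓ = 1 := by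
    intro ℓ
    rw [hSb, hWb, sandwich_mul (U ℓ) (hU' ℓ)]
    have : (fun i => Real.sqrt (lam ℓ i) * (Real.sqrt (lam ℓ i))⁻¹) = fun _ => (1:ℝ) := by
      funext i; exact mul_inv_cancel₀ (sqrt_ne ℓ i)
    rw [this, Matrix.diagonal_one, Matrix.mul_one, hU ℓ]
  have hRbWb : ∀ ℓ, Rb ℓ * Wb ℓ = P ℓ := by
    intro ℓ
    rw [hRb, hWb, sandwich_mul (U ℓ) (hU' ℓ), hP ℓ]
    have hf : (fun i => (if lam ℓ i ≤ 2 * σ ℓ then Real.sqrt (lam ℓ i) else 0)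
        * (Real.sqrt (lam ℓ i))⁻¹) = fun i => if lam ℓ i ≤ 2 * σ ℓ then (1:ℝ) else 0 := by
      funext i
      by_cases h : lam ℓ i ≤ 2 * σ ℓ
      · simp [h, mul_inv_cancel₀ (sqrt_ne ℓ i)]
      · simp [h]
    rw [hf]
  have hWbRb : ∀ ℓ, Wb ℓ * Rb ℓ = P ℓ := by
    intro ℓ
    rw [hWb, hRb, sandwich_mul (U ℓ) (hU' ℓ), hP ℓ]
    have hf : (fun i => (Real.sqrt (lam ℓ i))⁻¹
        * (if lam ℓ i ≤ 2 * σ ℓ then Real.sqrt (lam ℓ i) else 0))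
        = fun i => if lam ℓ i ≤ 2 * σ ℓ then (1:ℝ) else 0 := by
      funext i
      by_cases h : lam ℓ i ≤ 2 * σ ℓ
      · simp [h, inv_mul_cancel₀ (sqrt_ne ℓ i)]
      · simp [h]
    rw [hf]
  -- identification of D with the block diagonal on the sigma type
  have hDσ : D.submatrix e e = blockDiagonal' SigB := by
    ext a b
    obtain ⟨ℓ, i⟩ := a
    obtain ⟨k, j⟩ := b
    have hea : e ⟨ℓ, i⟩ = i.1 := rfl
    have heb : e ⟨k, j⟩ = j.1 := rfl
    rw [Matrix.submatrix_apply, hea, heb, hDdef]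
    by_cases h : ℓ = k
    · subst h
      rw [blockDiagonal'_apply_eq]
      rw [if_pos (i.2.trans j.2.symm)]
      rfl
    · rw [blockDiagonal'_apply_ne _ _ _ h]
      rw [if_neg]
      rw [i.2, j.2]
      exact h
  have hDback : (blockDiagonal' SigB).submatrix ⇑e.symm ⇑e.symm = D := by
    rw [← hDσ, Matrix.submatrix_submatrix]
    have h1 : ⇑e ∘ ⇑e.symm = id := funext fun x => e.apply_symm_apply x
    rw [h1, Matrix.submatrix_id_id]
  -- identify the square root of D
  set Sd : Matrix n n ℝ := (blockDiagonal' Sb).submatrix ⇑e.symm ⇑e.symm with hSd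
  have hSbPSD : ∀ ℓ, (Sb ℓ).PosSemidef := by
    intro ℓ
    have hdPSD : (Matrix.diagonal (fun i => Real.sqrt (lam ℓ i))).PosSemidef :=
      Matrix.PosSemidef.diagonal fun i => Real.sqrt_nonneg _
    have := hdPSD.mul_mul_conjTranspose_same (U ℓ)
    rwa [Matrix.conjTranspose_eq_transpose_of_trivial] at this
  have hSdPSD : Sd.PosSemidef :=
    (blockDiagonal'_posSemidef Sb hSbPSD).submatrix ⇑e.symm
  have hSdsq : Sd ^ 2 = D := by
    rw [pow_two, hSd, Matrix.submatrix_mul_equiv _ _ _ e.symm _, ← Matrix.blockDiagonal'_mul]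
    have : (fun k => Sb k * Sb k) = SigB := funext hSbSb
    rw [this, hDback]
  have hsqrt : hD.posSemidef.sqrt = Sd := psd_sqrt_eq hSdPSD hD.posSemidef hSdsq
  -- identify the inverse square root
  set Wd : Matrix n n ℝ := (blockDiagonal' Wb).submatrix ⇑e.symm ⇑e.symm with hWd
  have hinv : (hD.posSemidef.sqrt)⁻¹ = Wd := by
    rw [hsqrt]
    apply Matrix.inv_eq_right_inv
    rw [hSd, hWd, Matrix.submatrix_mul_equiv _ _ _ e.symm _, ← Matrix.blockDiagonal'_mul]
    have h2 : (fun k => Sb k * Wb k) = (1 : ∀ ℓ : L, Matrix {i : n // blk i = ℓ} {i : n // blk i = ℓ} ℝ) :=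
      funext hSbWb
    rw [h2, Matrix.blockDiagonal'_one, Matrix.submatrix_one_equiv]
  -- the whitened matrix on the sigma type
  set Yσ : Matrix (Σ ℓ : L, {i : n // blk i = ℓ}) (Σ ℓ : L, {i : n // blk i = ℓ}) ℝ :=
    (Sig - D).submatrix ⇑e ⇑e with hYσ
  set Mσ : Matrix (Σ ℓ : L, {i : n // blk i = ℓ}) (Σ ℓ : L, {i : n // blk i = ℓ}) ℝ :=
    M.submatrix ⇑e ⇑e with hMσdef
  have hWdsub : Wd.submatrix ⇑e ⇑e = blockDiagonal' Wb := by
    rw [hWd, Matrix.submatrix_submatrix]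
    have h1 : ⇑e.symm ∘ ⇑e = id := funext fun x => e.symm_apply_apply x
    rw [h1, Matrix.submatrix_id_id]
  have hMσ : Mσ = blockDiagonal' Wb * Yσ * blockDiagonal' Wb := by
    rw [hMσdef, hM, hinv, ← hWdsub, hYσ,
      Matrix.submatrix_mul_equiv _ _ _ e _, Matrix.submatrix_mul_equiv _ _ _ e _]
  have hblkM : ∀ ℓ k, blkOf Mσ ℓ k = Wb ℓ * blkOf Yσ ℓ k * Wb k := by
    intro ℓ k; rw [hMσ]; exact blkOf_sandwich Wb Yσ ℓ k
  have hYblk : ∀ ℓ k, ℓ ≠ k → blkOf Yσ ℓ k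
      = Matrix.of (fun (i : {i : n // blk i = ℓ}) (j : {i : n // blk i = k}) =>
          Sig i.1 j.1) := by
    intro ℓ k hlk
    ext i j
    show (Sig - D) (e ⟨ℓ, i⟩) (e ⟨k, j⟩) = Sig i.1 j.1
    have he1 : e ⟨ℓ, i⟩ = i.1 := rfl
    have he2 : e ⟨k, j⟩ = j.1 := rfl
    rw [he1, he2, Matrix.sub_apply, hDdef, if_neg (by rw [i.2, j.2]; exact hlk), sub_zero]
  -- per-pair estimate
  have qbound : ∀ ℓ : L, 0 < σ ℓ → ∀ x,
      (Rb ℓ *ᵥ x) ⬝ᵥ (Rb ℓ *ᵥ x) ≤ (2 * σ ℓ) * (x ⬝ᵥ x) := by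
    intro ℓ hσℓ x
    rw [hRb]
    refine qform_bound (U ℓ) (hU ℓ) (hU' ℓ) _ _ (fun i => ?_) x
    by_cases h : lam ℓ i ≤ 2 * σ ℓ
    · rw [if_pos h, Real.sq_sqrt (lam_pos ℓ i).le]; exact h
    · rw [if_neg h]; norm_num; linarith
  have key : ∀ ℓ k, ℓ ≠ k →
      frobSq (P ℓ * (Matrix.of fun (i : {i : n // blk i = ℓ}) (j : {i : n // blk i = k}) =>
        Sig i.1 j.1) * P k) / (σ ℓ * σ k) ≤ 4 * frobSq (blkOf Mσ ℓ k) := by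
    intro ℓ k hlk
    by_cases hne : Nonempty {i : n // blk i = ℓ} ∧ Nonempty {i : n // blk i = k}
    · obtain ⟨h1, h2⟩ := hne
      have hσℓ := sig_pos ℓ h1
      have hσk := sig_pos k h2
      set Z := blkOf Mσ ℓ k with hZ
      have hPP : P ℓ * (Matrix.of fun (i : {i : n // blk i = ℓ})
            (j : {i : n // blk i = k}) => Sig i.1 j.1) * P k = Rb ℓ * Z * Rb k := by
        rw [hZ, hblkM ℓ k, hYblk ℓ k hlk]
        simp only [← Matrix.mul_assoc]
        rw [hRbWb ℓ, Matrix.mul_assoc (P ℓ * _), hWbRb k]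
      have hRkT : (Rb k)ᵀ = Rb k := by rw [hRb]; exact sandwich_transpose (U k) _
      have e1 : frobSq ((Rb ℓ * Z) * Rb k) ≤ (2 * σ k) * frobSq (Rb ℓ * Z) :=
        frobSq_mul_right_le (Rb k) (Rb ℓ * Z) (2 * σ k) hRkT (qbound k hσk)
      have e2 : frobSq (Rb ℓ * Z) ≤ (2 * σ ℓ) * frobSq Z :=
        frobSq_mul_left_le (Rb ℓ) Z (2 * σ ℓ) (qbound ℓ hσℓ)
      have hchain : frobSq (P ℓ * (Matrix.of fun (i : {i : n // blk i = ℓ})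
            (j : {i : n // blk i = k}) => Sig i.1 j.1) * P k)
          ≤ 4 * frobSq Z * (σ ℓ * σ k) := by
        rw [hPP]
        calc frobSq ((Rb ℓ * Z) * Rb k) ≤ (2 * σ k) * frobSq (Rb ℓ * Z) := e1
          _ ≤ (2 * σ k) * ((2 * σ ℓ) * frobSq Z) :=
              mul_le_mul_of_nonneg_left e2 (by positivity)
          _ = 4 * frobSq Z * (σ ℓ * σ k) := by ring
      rw [div_le_iff₀ (mul_pos hσℓ hσk)]
      exact hchain
    · have hzero : frobSq (P ℓ * (Matrix.of fun (i : {i : n // blk i = ℓ})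
          (j : {i : n // blk i = k}) => Sig i.1 j.1) * P k) = 0 := by
        rcases not_and_or.mp hne with h | h
        · have : IsEmpty {i : n // blk i = ℓ} := not_nonempty_iff.mp h
          rw [frobSq, Finset.univ_eq_empty, Finset.sum_empty]
        · have : IsEmpty {i : n // blk i = k} := not_nonempty_iff.mp h
          rw [frobSq]
          apply Finset.sum_eq_zero; intro i _
          rw [Finset.univ_eq_empty, Finset.sum_empty]
      rw [hzero, zero_div]
      exact mul_nonneg (by norm_num) (frobSq_nonneg _)
  -- summing up
  have hT : (∑ ℓ : L, ∑ k : L, if ℓ = k then 0 else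
      frobN (P ℓ * (Matrix.of fun (i : {i : n // blk i = ℓ}) (j : {i : n // blk i = k}) =>
        Sig i.1 j.1) * P k) ^ 2 / (σ ℓ * σ k)) ≤ 4 * frobSq M := by
    have h1 : (∑ ℓ : L, ∑ k : L, if ℓ = k then 0 else
        frobN (P ℓ * (Matrix.of fun (i : {i : n // blk i = ℓ}) (j : {i : n // blk i = k}) =>
          Sig i.1 j.1) * P k) ^ 2 / (σ ℓ * σ k))
        ≤ ∑ ℓ : L, ∑ k : L, 4 * frobSq (blkOf Mσ ℓ k) := by
      refine Finset.sum_le_sum fun ℓ _ => Finset.sum_le_sum fun k _ => ?_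
      by_cases h : ℓ = k
      · rw [if_pos h]; exact mul_nonneg (by norm_num) (frobSq_nonneg _)
      · rw [if_neg h, frobN_sq]; exact key ℓ k h
    have h2 : (∑ ℓ : L, ∑ k : L, 4 * frobSq (blkOf Mσ ℓ k)) = 4 * frobSq Mσ := by
      rw [frobSq_sigma Mσ, Finset.mul_sum]
      exact Finset.sum_congr rfl fun ℓ _ => (Finset.mul_sum _ _ _).symm
    have h3 : frobSq Mσ = frobSq M := frobSq_submatrix e e M
    rw [h2, h3] at h1
    exact h1
  have hopn : (0:ℝ) ≤ opN M := norm_nonneg _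
  have hfin : (1 / (4 * (Fintype.card n : ℝ))) *
      (∑ ℓ : L, ∑ k : L, if ℓ = k then 0 else
        frobN (P ℓ * (Matrix.of fun (i : {i : n // blk i = ℓ}) (j : {i : n // blk i = k}) =>
          Sig i.1 j.1) * P k) ^ 2 / (σ ℓ * σ k)) ≤ opN M ^ 2 := by
    rcases Nat.eq_zero_or_pos (Fintype.card n) with hc | hc
    · rw [hc]
      simp only [Nat.cast_zero, mul_zero, div_zero, one_div, _root_.inv_zero, zero_mul]
      exact sq_nonneg _
    · have hd : (0:ℝ) < (Fintype.card n : ℝ) := by exact_mod_cast hc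
      have hc1 : (0:ℝ) ≤ 1 / (4 * (Fintype.card n : ℝ)) := by positivity
      have hfm := frobSq_le_card_mul_opN_sq M
      calc (1 / (4 * (Fintype.card n : ℝ))) * _ ≤ (1 / (4 * (Fintype.card n : ℝ))) *
            (4 * frobSq M) := mul_le_mul_of_nonneg_left hT hc1
        _ = frobSq M / (Fintype.card n : ℝ) := by field_simp
        _ ≤ opN M ^ 2 := by rw [div_le_iff₀ hd]; linarith [hfm]
  rw [ge_iff_le]
  calc Real.sqrt _ ≤ Real.sqrt (opN M ^ 2) := Real.sqrt_le_sqrt hfin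
    _ = opN M := Real.sqrt_sq hopn
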